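/- Let G be a group and Δ a G-set such that for every subgroup H of G of prime power order, Δ^H ≠ ∅. Then for every finite subgroup K of G and every Δ-split surjection of G-modules π : A → B (meaning π splits G_δ-equivariantly for each δ ∈ Δ), π splits K-equivariantly. -/

import Mathlib

lemma avg19 {G : Type*} [Group G] {A B : Type*} [AddCommGroup A] [AddCommGroup B]
    [DistribMulAction G A] [DistribMulAction G B]
    (π : A →+ B) (hequiv : ∀ (g : G) (x : A), π (g • x) = g • π x)
    (K : Subgroup G) [Finite K] (P : Subgroup K)
    (s : B →+ A) (hs : ∀ b, π (s b) = b)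
    (heq : ∀ k : K, k ∈ P → ∀ b, s ((k : G) • b) = (k : G) • s b) :
    ∃ t : B →+ A, (∀ b, π (t b) = P.index • b) ∧ ∀ g ∈ K, ∀ b, t (g • b) = g • t b := by
  classical
  haveI : Fintype (K ⧸ P) := Fintype.ofFinite _
  set h : K → (B →+ A) := fun k =>
    ((DistribMulAction.toAddMonoidHom A (k : G)).comp s).comp
      (DistribMulAction.toAddMonoidHom B ((k : G)⁻¹)) with hh
  have hwd : ∀ k k' : K, k⁻¹ * k' ∈ P → h k = h k' := by
    intro k k' hr
    ext b
    show (k : G) • s ((k : G)⁻¹ • b) = (k' : G) • s ((k' : G)⁻¹ • b)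
    have h2 := heq _ (P.inv_mem hr) ((k : G)⁻¹ • b)
    rw [smul_smul] at h2
    have e : ((((k⁻¹ * k')⁻¹ : K) : G)) * ((k : G))⁻¹ = ((k' : G))⁻¹ := by
      push_cast
      group
    rw [e] at h2
    rw [h2, smul_smul]
    congr 1
    push_cast
    group
  set H0 : K ⧸ P → (B →+ A) := Quotient.lift h (fun k k' hr => hwd k k' (QuotientGroup.leftRel_apply.mp hr)) with hH0
  have H0mk : ∀ k : K, H0 (QuotientGroup.mk k) = h k := fun k => rfl
  refine ⟨∑ c : K ⧸ P, H0 c, ?_, ?_⟩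
  · intro b
    rw [AddMonoidHom.finset_sum_apply, map_sum]
    have : ∀ c : K ⧸ P, π (H0 c b) = b := by
      intro c
      induction c using Quotient.inductionOn with
      | h k =>
        rw [H0mk]
        simp only [hh, AddMonoidHom.comp_apply, DistribMulAction.toAddMonoidHom_apply]
        rw [hequiv, hs, smul_smul, mul_inv_cancel, one_smul]
    rw [Finset.sum_congr rfl fun c _ => this c, Finset.sum_const, Finset.card_univ,
      Subgroup.index, Nat.card_eq_fintype_card]
  · intro g hg b
    set k₀ : K := ⟨g, hg⟩ with hk₀
    have key : ∀ c : K ⧸ P, H0 c (g • b) = g • H0 (k₀⁻¹ • c) b := by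
      intro c
      induction c using Quotient.inductionOn with
      | h k =>
        have : k₀⁻¹ • (QuotientGroup.mk k : K ⧸ P) = QuotientGroup.mk (k₀⁻¹ * k) := rfl
        rw [H0mk, this, H0mk]
        show (k : G) • s ((k : G)⁻¹ • g • b) =
          g • (((k₀⁻¹ * k : K) : G) • s (((k₀⁻¹ * k : K) : G)⁻¹ • b))
        have e1 : (((k₀⁻¹ * k : K) : G))⁻¹ • b = (k : G)⁻¹ • g • b := by
          rw [smul_smul]
          congr 1
          push_cast
          rw [show ((k₀ : G)) = g from rfl]
          group
        have e3 : g * ((k₀⁻¹ * k : K) : G) = (k : G) := by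
          push_cast
          rw [show ((k₀ : G)) = g from rfl]
          group
        rw [e1]
        conv_rhs => rw [smul_smul]
        rw [e3]
    rw [AddMonoidHom.finset_sum_apply, Finset.sum_congr rfl fun c _ => key c,
      AddMonoidHom.finset_sum_apply, ← Finset.smul_sum]
    congr 1
    exact Fintype.sum_bijective (fun c => k₀⁻¹ • c) (MulAction.bijective _) _ _ (fun c => rfl)

lemma gcdmem19 (I : AddSubgroup ℤ) {ι : Type*} [DecidableEq ι] (S : Finset ι) (f : ι → ℕ)
    (h : ∀ i ∈ S, ((f i : ℤ)) ∈ I) : ((S.gcd f : ℕ) : ℤ) ∈ I := by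
  have key : ∀ m n : ℕ, (m : ℤ) ∈ I → (n : ℤ) ∈ I → ((Nat.gcd m n : ℕ) : ℤ) ∈ I := by
    intro m n hm hn
    rw [← Int.gcd_natCast_natCast, Int.gcd_eq_gcd_ab]
    refine I.add_mem ?_ ?_
    · simpa [smul_eq_mul, mul_comm] using I.zsmul_mem hm (Int.gcdA m n)
    · simpa [smul_eq_mul, mul_comm] using I.zsmul_mem hn (Int.gcdB m n)
  induction S using Finset.induction_on with
  | empty => simpa using I.zero_mem
  | insert a S' hni ih =>
    rw [Finset.gcd_insert]
    exact key _ _ (h a (Finset.mem_insert_self a S'))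
      (ih fun i hi => h i (Finset.mem_insert_of_mem hi))

/-- Let `Δ` be a `G`-set in which every subgroup of `G` of prime power order fixes a
point.  Then every `Δ`-split surjection of `G`-modules (one admitting a
`G_δ`-equivariant section for each `δ ∈ Δ`) splits `K`-equivariantly for every finite
subgroup `K` of `G`. -/
theorem stmt19 (G : Type*) [Group G] (Δ : Type*) [MulAction G Δ]
    (hΔ : ∀ H : Subgroup G, (∃ (p k : ℕ), p.Prime ∧ Nat.card H = p ^ k) →
      ∃ δ : Δ, ∀ g ∈ H, g • δ = δ)
    (A B : Type*) [AddCommGroup A] [AddCommGroup B]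
    [DistribMulAction G A] [DistribMulAction G B]
    (π : A →+ B) (hπ : Function.Surjective π)
    (hequiv : ∀ (g : G) (x : A), π (g • x) = g • π x)
    (hsplit : ∀ δ : Δ, ∃ s : B →+ A, (∀ b, π (s b) = b) ∧
      ∀ g ∈ MulAction.stabilizer G δ, ∀ b, s (g • b) = g • s b)
    (K : Subgroup G) [Finite K] :
    ∃ s : B →+ A, (∀ b, π (s b) = b) ∧ ∀ g ∈ K, ∀ b, s (g • b) = g • s b := by
  classical
  -- the subgroup of multipliers
  set I : AddSubgroup ℤ :=
    { carrier := {n : ℤ | ∃ s : B →+ A, (∀ b, π (s b) = n • b) ∧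
        ∀ g ∈ K, ∀ b, s (g • b) = g • s b}
      zero_mem' := ⟨0, by simp, by simp⟩
      add_mem' := by
        rintro m n ⟨s₁, hs₁, he₁⟩ ⟨s₂, hs₂, he₂⟩
        exact ⟨s₁ + s₂, fun b => by simp [hs₁, hs₂, add_zsmul],
          fun g hg b => by simp [he₁ g hg, he₂ g hg, smul_add]⟩
      neg_mem' := by
        rintro n ⟨s, hs, he⟩
        exact ⟨-s, fun b => by simp [hs, neg_zsmul],
          fun g hg b => by simp [he g hg]⟩ } with hI
  -- each Sylow index is a multiplier
  have key : ∀ p : ℕ, p.Prime → ∀ P : Sylow p K, (((P : Subgroup K).index : ℤ)) ∈ I := by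
    intro p hp P
    haveI : Fact p.Prime := ⟨hp⟩
    obtain ⟨k, hk⟩ := P.2.exists_card_eq
    set H : Subgroup G := (P : Subgroup K).map K.subtype with hH
    have hcard : Nat.card H = p ^ k := by
      rw [← hk]
      exact (Nat.card_eq_of_bijective _
        ((P : Subgroup K).equivMapOfInjective K.subtype K.subtype_injective).bijective).symm
    obtain ⟨δ, hδ⟩ := hΔ H ⟨p, k, hp, hcard⟩
    obtain ⟨s, hs, hstab⟩ := hsplit δ
    have heq : ∀ x : K, x ∈ (P : Subgroup K) → ∀ b, s ((x : G) • b) = (x : G) • s b := by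
      intro x hx b
      refine hstab _ ?_ b
      rw [MulAction.mem_stabilizer_iff]
      exact hδ _ ⟨x, hx, rfl⟩
    obtain ⟨t, ht, hte⟩ := avg19 π hequiv K (P : Subgroup K) s hs heq
    exact ⟨t, fun b => by rw [ht b, natCast_zsmul], hte⟩
  -- the gcd of the Sylow indices is 1
  rcases eq_or_ne (Nat.card K) 1 with hK | hK
  · -- trivial K
    have hbot : K = ⊥ := Subgroup.card_eq_one.mp hK
    obtain ⟨δ, -⟩ := hΔ ⊥ ⟨2, 0, Nat.prime_two, by simp⟩
    obtain ⟨s, hs, -⟩ := hsplit δ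
    refine ⟨s, hs, ?_⟩
    intro g hg b
    rw [hbot, Subgroup.mem_bot] at hg
    subst hg
    simp
  · set f : ℕ → ℕ := fun p =>
      if h : p.Prime then
        haveI : Fact p.Prime := ⟨h⟩
        ((Classical.arbitrary (Sylow p ↥K) : Sylow p ↥K) : Subgroup ↥K).index
      else 1 with hf
    set S : Finset ℕ := (Nat.card K).primeFactors with hS
    have hfI : ∀ p ∈ S, ((f p : ℤ)) ∈ I := by
      intro p hpS
      have hp := Nat.prime_of_mem_primeFactors hpS
      rw [hf]
      simp only [dif_pos hp]
      exact key p hp _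
    have hmem := gcdmem19 I S f hfI
    have hg1 : S.gcd f = 1 := by
      by_contra hne
      obtain ⟨q, hq, hqd⟩ := Nat.exists_prime_and_dvd hne
      have hcK : Nat.card K ≠ 0 := Nat.card_pos.ne'
      have h1K : 1 < Nat.card K := lt_of_le_of_ne Nat.card_pos hK.symm
      obtain ⟨p₀, hp₀⟩ := Nat.nonempty_primeFactors.mpr h1K
      have hdvdn : S.gcd f ∣ Nat.card K := by
        refine (Finset.gcd_dvd hp₀).trans ?_
        have hp := Nat.prime_of_mem_primeFactors hp₀
        rw [hf]
        simp only [dif_pos hp]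
        exact Subgroup.index_dvd_card (G := ↥K) _
      have hqS : q ∈ S := Nat.mem_primeFactors.mpr ⟨hq, hqd.trans hdvdn, hcK⟩
      haveI : Fact q.Prime := ⟨hq⟩
      have hdq := hqd.trans (Finset.gcd_dvd hqS)
      rw [hf] at hdq
      simp only [dif_pos hq] at hdq
      exact Sylow.not_dvd_index (Classical.arbitrary (Sylow q ↥K)) hdq
    rw [hg1] at hmem
    obtain ⟨s, hs, he⟩ := hmem
    exact ⟨s, fun b => by rw [hs b]; simp, he⟩
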